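/- Let q ≥ 1 and consider the quotient group G = Z^{Z/q} / ⟨e_j + e_{j+1} : j ∈ Z/q⟩. If q is even then G is infinite cyclic generated by the image of e_0, and the linear form λ(x) = Σ_{j} (-1)^j x_j is well-defined on G with λ(e_0) = 1; if q is odd then G ≅ Z/2 and the mod-2 sum of coordinates Σ_j x_j mod 2 is a well-defined nonzero form on G. -/

import Mathlib

/-- The subgroup of the free abelian group `ℤ^(ℤ/q)` generated by the elements
`e_j + e_{j+1}` for `j ∈ ℤ/q`. -/
abbrev tubeRel (q : ℕ) [NeZero q] : Submodule ℤ (ZMod q → ℤ) :=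
  Submodule.span ℤ
    (Set.range fun j : ZMod q => (Pi.single j 1 : ZMod q → ℤ) + Pi.single (j + 1) 1)

lemma tube_step (q : ℕ) [NeZero q] (j : ZMod q) :
    (Submodule.Quotient.mk (Pi.single (j+1) (1:ℤ)) : (ZMod q → ℤ) ⧸ tubeRel q) =
      - Submodule.Quotient.mk (Pi.single j 1) := by
  rw [eq_neg_iff_add_eq_zero, ← Submodule.Quotient.mk_add, add_comm]
  rw [Submodule.Quotient.mk_eq_zero]
  exact Submodule.subset_span ⟨j, rfl⟩

lemma tube_key (q : ℕ) [NeZero q] (n : ℕ) :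
    (Submodule.Quotient.mk (Pi.single ((n : ZMod q)) (1:ℤ)) : (ZMod q → ℤ) ⧸ tubeRel q) =
      ((-1:ℤ)^n) • Submodule.Quotient.mk (Pi.single (0 : ZMod q) 1) := by
  induction n with
  | zero => simp
  | succ n ih =>
    have h : ((n+1 : ℕ) : ZMod q) = (n : ZMod q) + 1 := by push_cast; ring
    rw [h, tube_step, ih, pow_succ]
    simp [neg_smul]

lemma tube_gen (q : ℕ) [NeZero q] (g : (ZMod q → ℤ) ⧸ tubeRel q) :
    ∃ k : ℤ, g = k • Submodule.Quotient.mk (Pi.single (0 : ZMod q) (1 : ℤ)) := by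
  obtain ⟨x, rfl⟩ := Submodule.Quotient.mk_surjective _ g
  refine ⟨∑ j : ZMod q, x j * (-1)^j.val, ?_⟩
  have hx : x = ∑ j : ZMod q, Pi.single j (x j) := (Finset.univ_sum_single x).symm
  calc (Submodule.Quotient.mk x : (ZMod q → ℤ) ⧸ tubeRel q)
      = ∑ j : ZMod q, Submodule.Quotient.mk (Pi.single j (x j)) := by
        conv_lhs => rw [hx]
        exact map_sum (Submodule.mkQ (tubeRel q)) _ _
    _ = ∑ j : ZMod q, (x j * (-1)^j.val) • Submodule.Quotient.mk (Pi.single (0:ZMod q) 1) := by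
        refine Finset.sum_congr rfl fun j _ => ?_
        have h1 : Pi.single j (x j) = (x j) • (Pi.single j 1 : ZMod q → ℤ) := by
          rw [← Pi.single_smul]; simp
        have h2 := tube_key q j.val
        rw [ZMod.natCast_val, ZMod.cast_id] at h2
        rw [h1, Submodule.Quotient.mk_smul, h2, smul_smul]
    _ = _ := by rw [← Finset.sum_smul]

lemma neg_one_pow_mod (q : ℕ) (hq : Even q) (m : ℕ) : ((-1:ℤ))^(m % q) = (-1)^m := by
  conv_rhs => rw [← Nat.div_add_mod m q]
  rw [pow_add, pow_mul, hq.neg_one_pow, one_pow, one_mul]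

/-- The signed-sum linear form on `ℤ^(ℤ/q)`. -/
def lam0 (q : ℕ) [NeZero q] : (ZMod q → ℤ) →ₗ[ℤ] ℤ where
  toFun x := ∑ j : ZMod q, (-1:ℤ)^j.val * x j
  map_add' a b := by simp [mul_add, Finset.sum_add_distrib]
  map_smul' c a := by
    simp only [Pi.smul_apply, smul_eq_mul, RingHom.id_apply, Finset.mul_sum]
    exact Finset.sum_congr rfl fun x _ => by ring

lemma lam0_single (q : ℕ) [NeZero q] (i : ZMod q) :
    lam0 q (Pi.single i 1) = (-1:ℤ)^i.val := by
  simp only [lam0, LinearMap.coe_mk, AddHom.coe_mk]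
  rw [Finset.sum_eq_single i]
  · simp
  · intro b _ hb; simp [Pi.single_apply, hb]
  · simp

/-- The mod-2 coordinate-sum linear form. -/
def mu0 (q : ℕ) [NeZero q] : (ZMod q → ℤ) →ₗ[ℤ] ZMod 2 where
  toFun x := ∑ j : ZMod q, ((x j : ℤ) : ZMod 2)
  map_add' a b := by push_cast; simp [Finset.sum_add_distrib]
  map_smul' c a := by
    simp [Finset.mul_sum, zsmul_eq_mul]

lemma mu0_single (q : ℕ) [NeZero q] (i : ZMod q) :
    mu0 q (Pi.single i 1) = 1 := by
  simp only [mu0, LinearMap.coe_mk, AddHom.coe_mk]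
  rw [← Int.cast_sum, Finset.sum_pi_single']
  simp

/-- Let `G = ℤ^(ℤ/q) / ⟨e_j + e_{j+1}⟩`.  If `q` is even, `G` is infinite cyclic
generated by the image of `e_0`, and `λ(x) = ∑ (-1)^j x_j` is a well-defined form on
`G` with `λ(e_0) = 1`.  If `q` is odd, `G ≅ ℤ/2` and the mod-2 coordinate sum is a
well-defined nonzero form on `G`. -/
theorem cluster_tube_grothendieck_group (q : ℕ) [NeZero q] :
    (Even q →
      ∃ lam : ((ZMod q → ℤ) ⧸ tubeRel q) →+ ℤ,
        (∀ x : ZMod q → ℤ,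
          lam (Submodule.Quotient.mk x) = ∑ j : ZMod q, (-1 : ℤ) ^ j.val * x j) ∧
        lam (Submodule.Quotient.mk (Pi.single 0 1)) = 1 ∧
        (∀ g : (ZMod q → ℤ) ⧸ tubeRel q,
          ∃ k : ℤ, g = k • Submodule.Quotient.mk (Pi.single (0 : ZMod q) (1 : ℤ))) ∧
        Function.Injective fun k : ℤ =>
          k • (Submodule.Quotient.mk (Pi.single (0 : ZMod q) (1 : ℤ)) :
            (ZMod q → ℤ) ⧸ tubeRel q)) ∧
    (Odd q →
      Nonempty (((ZMod q → ℤ) ⧸ tubeRel q) ≃+ ZMod 2) ∧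
      ∃ mu : ((ZMod q → ℤ) ⧸ tubeRel q) →+ ZMod 2,
        (∀ x : ZMod q → ℤ,
          mu (Submodule.Quotient.mk x) = ∑ j : ZMod q, ((x j : ℤ) : ZMod 2)) ∧
        mu ≠ 0) := by
  constructor
  · -- even case
    intro hq
    have hq2 : 2 ≤ q := by
      rcases hq with ⟨r, rfl⟩
      have : r ≠ 0 := by rintro rfl; exact (NeZero.ne 0) rfl
      omega
    have hker : tubeRel q ≤ LinearMap.ker (lam0 q) := by
      rw [Submodule.span_le]
      rintro _ ⟨j, rfl⟩
      haveI : Fact (1 < q) := ⟨hq2⟩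
      simp only [SetLike.mem_coe, LinearMap.mem_ker, map_add, lam0_single]
      have hval : (j + 1).val = (j.val + 1) % q := by
        rw [ZMod.val_add, ZMod.val_one]
      rw [hval, neg_one_pow_mod q hq, pow_succ]
      ring
    set lamL := (tubeRel q).liftQ (lam0 q) hker with hlamL
    have h1 : lamL (Submodule.Quotient.mk (Pi.single (0:ZMod q) (1:ℤ))) = 1 := by
      rw [hlamL, Submodule.liftQ_apply, lam0_single]; simp
    refine ⟨lamL.toAddMonoidHom, ?_, h1, tube_gen q, ?_⟩
    · intro x
      simp [hlamL, Submodule.liftQ_apply, lam0]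
    · intro a b hab
      have := congrArg lamL hab
      simpa [map_zsmul, h1, smul_eq_mul] using this
  · -- odd case
    intro hq
    have hker : tubeRel q ≤ LinearMap.ker (mu0 q) := by
      rw [Submodule.span_le]
      rintro _ ⟨j, rfl⟩
      simp only [SetLike.mem_coe, LinearMap.mem_ker, map_add, mu0_single]
      decide
    set muL := (tubeRel q).liftQ (mu0 q) hker with hmuL
    have hmu1 : muL (Submodule.Quotient.mk (Pi.single (0:ZMod q) (1:ℤ))) = 1 := by
      rw [hmuL, Submodule.liftQ_apply, mu0_single]
    -- 2 • e₀ = 0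
    have h2e0 : (2:ℤ) • (Submodule.Quotient.mk (Pi.single (0:ZMod q) (1:ℤ)) :
        (ZMod q → ℤ) ⧸ tubeRel q) = 0 := by
      have h := tube_key q q
      rw [ZMod.natCast_self, hq.neg_one_pow] at h
      have : (Submodule.Quotient.mk (Pi.single (0:ZMod q) (1:ℤ)) :
          (ZMod q → ℤ) ⧸ tubeRel q) = - Submodule.Quotient.mk (Pi.single (0:ZMod q) 1) := by
        simpa using h
      rw [two_smul]
      rw [eq_neg_iff_add_eq_zero] at this
      exact this
    -- inverse map ZMod 2 →+ G
    let f0 : ℤ →+ ((ZMod q → ℤ) ⧸ tubeRel q) :=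
      zmultiplesHom _ (Submodule.Quotient.mk (Pi.single (0:ZMod q) (1:ℤ)))
    have hf0 : f0 ((2:ℕ) : ℤ) = 0 := by simpa [f0, zmultiplesHom] using h2e0
    let f : ZMod 2 →+ ((ZMod q → ℤ) ⧸ tubeRel q) := ZMod.lift 2 ⟨f0, hf0⟩
    have hfk : ∀ k : ℤ, f ((k : ZMod 2)) =
        k • Submodule.Quotient.mk (Pi.single (0:ZMod q) (1:ℤ)) := by
      intro k
      exact (ZMod.lift_coe 2 ⟨f0, hf0⟩ k).trans (by simp [f0, zmultiplesHom])
    have hleft : Function.LeftInverse f muL := by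
      intro g
      obtain ⟨k, rfl⟩ := tube_gen q g
      rw [map_smul, hmu1]
      have h : (k : ℤ) • (1 : ZMod 2) = ((k : ZMod 2)) := by
        rw [zsmul_eq_mul, mul_one]
      rw [h, hfk]
    have hright : Function.RightInverse f muL := by
      intro a
      obtain ⟨k, rfl⟩ : ∃ k : ℤ, (k : ZMod 2) = a := ⟨(a.val : ℤ), by simp⟩
      rw [hfk, map_smul, hmu1]
      rw [zsmul_eq_mul, mul_one]
    constructor
    · exact ⟨⟨⟨muL, f, hleft, hright⟩, muL.map_add⟩⟩
    · refine ⟨muL.toAddMonoidHom, ?_, ?_⟩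
      · intro x
        simp [hmuL, Submodule.liftQ_apply, mu0]
      · intro h0
        have h := DFunLike.congr_fun h0
          (Submodule.Quotient.mk (Pi.single (0:ZMod q) (1:ℤ)))
        simp only [AddMonoidHom.zero_apply, LinearMap.toAddMonoidHom_coe] at h
        rw [hmu1] at h
        exact one_ne_zero h
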